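/- For every integer n ≥ 1 and all x ∈ [−2,2]: n·φ_n(x) = ∫ y·φ_n'(y) β(dy) + x·∫ φ_n'(y) β(dy) − (4 − x²)·∫ (φ_n'(x) − φ_n'(y))/(x − y) β(dy), where φ_n(x) = T_n(x/2) and β is the arcsine law on [−2,2]. In other words, the integro-differential operator (𝒩φ)(x) = ∫ yφ'(y)β(dy) + x∫ φ'(y)β(dy) − (4−x²)∫ (φ'(x)−φ'(y))/(x−y) β(dy) satisfies 𝒩φ_n = n·φ_n. -/

import Mathlib

open MeasureTheory Real Polynomial Polynomial.Chebyshev Set Filter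

/-- The arcsine law on `[-2,2]`. -/
noncomputable def arcsineLaw : Measure ℝ :=
  (volume.restrict (Set.Icc (-2 : ℝ) 2)).withDensity
    fun y => ENNReal.ofReal (1 / (π * Real.sqrt (4 - y ^ 2)))


lemma image_two_cos : (fun θ : ℝ => 2 * Real.cos θ) '' Set.Ioo 0 π = Set.Ioo (-2 : ℝ) 2 := by
  ext y
  simp only [Set.mem_image, Set.mem_Ioo]
  constructor
  · rintro ⟨θ, ⟨h0, hπ⟩, rfl⟩
    have h1 : Real.cos θ < 1 := by
      have := Real.cos_lt_cos_of_nonneg_of_le_pi le_rfl hπ.le h0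
      simpa using this
    have h2 : -1 < Real.cos θ := by
      have := Real.cos_lt_cos_of_nonneg_of_le_pi h0.le le_rfl hπ
      simpa using this
    constructor <;> nlinarith
  · rintro ⟨h1, h2⟩
    refine ⟨Real.arccos (y/2), ⟨?_, ?_⟩, ?_⟩
    · exact Real.arccos_pos.2 (by linarith)
    · rcases (Real.arccos_le_pi (y/2)).lt_or_eq with h | h
      · exact h
      · exact absurd (Real.arccos_eq_pi.1 h) (by push_neg; linarith)
    · rw [Real.cos_arccos (by linarith : (-1:ℝ) ≤ y/2) (by linarith : y/2 ≤ 1)]; ring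

lemma arcsineLaw_eq : arcsineLaw =
    (volume.restrict (Set.Ioo (-2 : ℝ) 2)).withDensity
      fun y => ((1 / (π * Real.sqrt (4 - y ^ 2))).toNNReal : ENNReal) := by
  unfold arcsineLaw
  rw [Measure.restrict_congr_set Ioo_ae_eq_Icc]
  rfl

lemma dens_meas : Measurable fun y : ℝ => (1 / (π * Real.sqrt (4 - y ^ 2))).toNNReal := by
  apply Measurable.real_toNNReal
  exact measurable_const.div ((Real.continuous_sqrt.comp (by continuity)).measurable.const_mul π)

lemma hasDeriv2cos (θ : ℝ) : HasDerivWithinAt (fun θ : ℝ => 2 * Real.cos θ)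
    (-2 * Real.sin θ) (Set.Ioo 0 π) θ := by
  have := (Real.hasDerivAt_cos θ).const_mul (2:ℝ)
  have h2 : 2 * -Real.sin θ = -2 * Real.sin θ := by ring
  rw [h2] at this
  exact this.hasDerivWithinAt

lemma injOn2cos : Set.InjOn (fun θ : ℝ => 2 * Real.cos θ) (Set.Ioo 0 π) := by
  intro a ha b hb h
  have h' : Real.cos a = Real.cos b := by
    have : 2 * Real.cos a = 2 * Real.cos b := h
    linarith
  exact Real.injOn_cos (Ioo_subset_Icc_self ha) (Ioo_subset_Icc_self hb) h'

lemma ptwise (f : ℝ → ℝ) :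
    Set.EqOn (fun θ => |(-2) * Real.sin θ| •
      (fun y => ((1 / (π * Real.sqrt (4 - y ^ 2))).toNNReal : ℝ) • f y) (2 * Real.cos θ))
      (fun θ => f (2 * Real.cos θ) / π) (Set.Ioo 0 π) := by
  intro θ hθ
  have hs : 0 < Real.sin θ := Real.sin_pos_of_pos_of_lt_pi hθ.1 hθ.2
  have hsqrt : Real.sqrt (4 - (2 * Real.cos θ) ^ 2) = 2 * Real.sin θ := by
    have h4 : 4 - (2 * Real.cos θ) ^ 2 = (2 * Real.sin θ) ^ 2 := by
      have := Real.sin_sq_add_cos_sq θ; nlinarith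
    rw [h4, Real.sqrt_sq (by positivity)]
  simp only [smul_eq_mul]
  rw [hsqrt, Real.coe_toNNReal _ (by positivity), abs_of_nonpos (by nlinarith)]
  field_simp

lemma arcsine_integrable_iff (f : ℝ → ℝ) :
    Integrable f arcsineLaw ↔ IntegrableOn (fun θ => f (2 * Real.cos θ) / π) (Set.Ioo 0 π) := by
  rw [arcsineLaw_eq, integrable_withDensity_iff_integrable_smul dens_meas]
  simp only [NNReal.smul_def]
  have h1 : Integrable (fun y => ((1 / (π * Real.sqrt (4 - y ^ 2))).toNNReal : ℝ) • f y)
      (volume.restrict (Set.Ioo (-2:ℝ) 2)) ↔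
      IntegrableOn (fun y => ((1 / (π * Real.sqrt (4 - y ^ 2))).toNNReal : ℝ) • f y)
      ((fun θ : ℝ => 2 * Real.cos θ) '' Set.Ioo 0 π) := by rw [image_two_cos]; rfl
  rw [h1, integrableOn_image_iff_integrableOn_abs_deriv_smul measurableSet_Ioo
    (fun θ _ => hasDeriv2cos θ) injOn2cos]
  exact integrableOn_congr_fun (ptwise f) measurableSet_Ioo

lemma arcsine_integral (f : ℝ → ℝ) :
    ∫ y, f y ∂arcsineLaw = ∫ θ in Set.Ioo 0 π, f (2 * Real.cos θ) / π := by
  rw [arcsineLaw_eq, integral_withDensity_eq_integral_smul dens_meas]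
  simp only [NNReal.smul_def]
  have h1 : (∫ y in Set.Ioo (-2:ℝ) 2, ((1 / (π * Real.sqrt (4 - y ^ 2))).toNNReal : ℝ) • f y)
      = ∫ y in (fun θ : ℝ => 2 * Real.cos θ) '' Set.Ioo 0 π,
        ((1 / (π * Real.sqrt (4 - y ^ 2))).toNNReal : ℝ) • f y := by rw [image_two_cos]
  rw [h1, integral_image_eq_integral_abs_deriv_smul measurableSet_Ioo
    (fun θ _ => hasDeriv2cos θ) injOn2cos]
  exact setIntegral_congr_fun measurableSet_Ioo (ptwise f)




lemma contEval (p : Polynomial ℝ) : Continuous fun y : ℝ => p.eval (y / 2) :=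
  p.continuous.comp (continuous_id.div_const 2)

lemma integrable_arcsine_of_continuous {f : ℝ → ℝ} (hf : Continuous f) :
    Integrable f arcsineLaw :=
  (arcsine_integrable_iff f).2
    ((((hf.comp (by continuity)).div_const π).integrableOn_Icc).mono_set Ioo_subset_Icc_self)

lemma Ioo_to_interval (g : ℝ → ℝ) :
    ∫ θ in Set.Ioo (0:ℝ) π, g θ = ∫ θ in (0:ℝ)..π, g θ := by
  rw [intervalIntegral.integral_of_le Real.pi_pos.le,
    MeasureTheory.Measure.restrict_congr_set Ioo_ae_eq_Ioc]

lemma integral_cos_nat (k : ℕ) : ∫ θ in (0:ℝ)..π, Real.cos (k * θ) = if k = 0 then π else 0 := by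
  rcases Nat.eq_zero_or_pos k with hk | hk
  · simp [hk]
  · have hk' : (k:ℝ) ≠ 0 := Nat.cast_ne_zero.2 hk.ne'
    rw [if_neg hk.ne']
    have := intervalIntegral.integral_comp_mul_left (a := (0:ℝ)) (b := π)
      (fun x => Real.cos x) hk'
    rw [this]
    simp [integral_cos, Real.sin_nat_mul_pi]

lemma cheb_T_integral (k : ℕ) :
    ∫ y, (T ℝ k).eval (y / 2) ∂arcsineLaw = if k = 0 then 1 else 0 := by
  rw [arcsine_integral]
  have h : ∀ θ : ℝ, (T ℝ k).eval (2 * Real.cos θ / 2) / π = Real.cos (k * θ) / π := by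
    intro θ
    have h2 : 2 * Real.cos θ / 2 = Real.cos θ := by ring
    rw [h2, Polynomial.Chebyshev.T_real_cos]
    norm_num
  simp only [h]
  rw [Ioo_to_interval, intervalIntegral.integral_div, integral_cos_nat]
  rcases Nat.eq_zero_or_pos k with hk | hk
  · simp [hk]
  · simp [hk.ne']

lemma cheb_U_rec (k : ℤ) : U ℝ (k + 2) = U ℝ k + 2 * T ℝ (k + 2) := by
  have h1 := Polynomial.Chebyshev.U_add_two ℝ k
  have h2 := Polynomial.Chebyshev.U_eq_X_mul_U_add_T ℝ (k + 1)
  have h3 : (k + 1 + 1 : ℤ) = k + 2 := by ring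
  rw [h3] at h2
  linear_combination 2 * h2 - h1

lemma cheb_U_integral (k : ℕ) :
    ∫ y, (U ℝ k).eval (y / 2) ∂arcsineLaw = if Even k then 1 else 0 := by
  induction k using Nat.twoStepInduction with
  | zero => simpa [Polynomial.Chebyshev.U_zero] using cheb_T_integral 0
  | one =>
    have h : (fun y : ℝ => (U ℝ ((1:ℕ):ℤ)).eval (y/2)) = fun y : ℝ => 2 * (T ℝ ((1:ℕ):ℤ)).eval (y/2) := by
      funext y
      norm_num [Polynomial.Chebyshev.U_one, Polynomial.Chebyshev.T_one]
    rw [h, integral_const_mul, cheb_T_integral 1]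
    norm_num
  | more k ih _ =>
    have hcast : ((k + 2 : ℕ) : ℤ) = (k : ℤ) + 2 := by push_cast; ring
    have hrec : ∀ y : ℝ, (U ℝ ((k + 2 : ℕ) : ℤ)).eval (y/2)
        = (U ℝ (k : ℤ)).eval (y/2) + 2 * (T ℝ ((k + 2 : ℕ) : ℤ)).eval (y/2) := by
      intro y
      rw [hcast, cheb_U_rec (k : ℤ), ← hcast]
      simp only [Polynomial.eval_add, Polynomial.eval_mul, Polynomial.eval_ofNat]
    simp only [hrec]
    rw [integral_add (integrable_arcsine_of_continuous (contEval _))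
      ((integrable_arcsine_of_continuous (contEval _)).const_mul 2), integral_const_mul,
      cheb_T_integral (k + 2)]
    simp only [Nat.add_eq_zero, and_false, if_false, mul_zero, add_zero, ih]
    congr 1
    simp [Nat.even_add]







lemma arcsine_ae_ne (x : ℝ) : ∀ᵐ y ∂arcsineLaw, y ≠ x := by
  have habs : arcsineLaw ≪ volume := by
    unfold arcsineLaw
    exact (withDensity_absolutelyContinuous _ _).trans
      (Measure.absolutelyContinuous_of_le Measure.restrict_le_self)
  have h0 : arcsineLaw {x} = 0 := habs (volume_singleton)
  rw [ae_iff]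
  convert h0 using 2
  ext y; simp

/-- The key induction: integrability and weighted integral of the Chebyshev-U
difference quotients. -/
lemma Dm_main (x : ℝ) (m : ℕ) :
    Integrable (fun y => ((U ℝ m).eval (x / 2) - (U ℝ m).eval (y / 2)) / (x - y)) arcsineLaw ∧
    (4 - x ^ 2) * ∫ y, ((U ℝ m).eval (x / 2) - (U ℝ m).eval (y / 2)) / (x - y) ∂arcsineLaw
      = 2 * ((if Even (m + 1) then (1:ℝ) else 0) + (if Even m then (1:ℝ) else 0) * (x / 2)
        - (T ℝ (m + 1 : ℕ)).eval (x / 2)) := by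
  induction m using Nat.twoStepInduction with
  | zero =>
    have h : (fun y : ℝ => ((U ℝ ((0:ℕ):ℤ)).eval (x / 2) - (U ℝ ((0:ℕ):ℤ)).eval (y / 2)) / (x - y))
        = fun _ => (0:ℝ) := by
      funext y; norm_num [Polynomial.Chebyshev.U_zero]
    rw [h]
    refine ⟨integrable_zero _ _ _, ?_⟩
    rw [integral_zero]
    norm_num [Polynomial.Chebyshev.T_one]
  | one =>
    have h : (fun y : ℝ => ((U ℝ ((1:ℕ):ℤ)).eval (x / 2) - (U ℝ ((1:ℕ):ℤ)).eval (y / 2)) / (x - y))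
        =ᵐ[arcsineLaw] fun _ => (1:ℝ) := by
      filter_upwards [arcsine_ae_ne x] with y hy
      have hxy : x - y ≠ 0 := sub_ne_zero.2 (Ne.symm hy)
      norm_num [Polynomial.Chebyshev.U_one]
      field_simp
    have hint : Integrable (fun _ : ℝ => (1:ℝ)) arcsineLaw :=
      integrable_arcsine_of_continuous continuous_const
    refine ⟨hint.congr h.symm, ?_⟩
    rw [integral_congr_ae h]
    have h1 : ∫ _ : ℝ, (1:ℝ) ∂arcsineLaw = 1 := by
      have := cheb_T_integral 0
      simpa [Polynomial.Chebyshev.T_zero] using this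
    rw [h1]
    have hT2 : (T ℝ ((1 + 1 : ℕ) : ℤ)).eval (x / 2) = 2 * (x/2)^2 - 1 := by
      norm_num [Polynomial.Chebyshev.T_two]
    rw [hT2]
    norm_num
    ring
  | more k ih1 ih2 =>
    have hrec : ∀ y : ℝ, y ≠ x →
        ((U ℝ ((k+2:ℕ):ℤ)).eval (x / 2) - (U ℝ ((k+2:ℕ):ℤ)).eval (y / 2)) / (x - y)
        = x * (((U ℝ ((k+1:ℕ):ℤ)).eval (x / 2) - (U ℝ ((k+1:ℕ):ℤ)).eval (y / 2)) / (x - y))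
          + (U ℝ ((k+1:ℕ):ℤ)).eval (y / 2)
          - ((U ℝ ((k:ℕ):ℤ)).eval (x / 2) - (U ℝ ((k:ℕ):ℤ)).eval (y / 2)) / (x - y) := by
      intro y hy
      have hxy : x - y ≠ 0 := sub_ne_zero.2 (Ne.symm hy)
      have hcast : ((k + 2 : ℕ) : ℤ) = ((k:ℤ) + 2) := by push_cast; ring
      have hcast1 : ((k + 1 : ℕ) : ℤ) = ((k:ℤ) + 1) := by push_cast; ring
      have hU := Polynomial.Chebyshev.U_add_two ℝ (k : ℤ)
      have hUx : (U ℝ ((k:ℤ) + 2)).eval (x/2)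
          = 2 * (x/2) * (U ℝ ((k:ℤ)+1)).eval (x/2) - (U ℝ (k:ℤ)).eval (x/2) := by
        rw [hU]; simp
      have hUy : (U ℝ ((k:ℤ) + 2)).eval (y/2)
          = 2 * (y/2) * (U ℝ ((k:ℤ)+1)).eval (y/2) - (U ℝ (k:ℤ)).eval (y/2) := by
        rw [hU]; simp
      simp only [hcast, hcast1, hUx, hUy]
      field_simp
      ring
    have hae : (fun y : ℝ =>
        ((U ℝ ((k+2:ℕ):ℤ)).eval (x / 2) - (U ℝ ((k+2:ℕ):ℤ)).eval (y / 2)) / (x - y))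
        =ᵐ[arcsineLaw] fun y : ℝ =>
          x * (((U ℝ ((k+1:ℕ):ℤ)).eval (x / 2) - (U ℝ ((k+1:ℕ):ℤ)).eval (y / 2)) / (x - y))
          + (U ℝ ((k+1:ℕ):ℤ)).eval (y / 2)
          - ((U ℝ ((k:ℕ):ℤ)).eval (x / 2) - (U ℝ ((k:ℕ):ℤ)).eval (y / 2)) / (x - y) := by
      filter_upwards [arcsine_ae_ne x] with y hy
      exact hrec y hy
    have hb : Integrable (fun y : ℝ =>
        x * (((U ℝ ((k+1:ℕ):ℤ)).eval (x / 2) - (U ℝ ((k+1:ℕ):ℤ)).eval (y / 2)) / (x - y)))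
        arcsineLaw := ih2.1.const_mul x
    have hc : Integrable (fun y : ℝ => (U ℝ ((k+1:ℕ):ℤ)).eval (y / 2)) arcsineLaw :=
      integrable_arcsine_of_continuous (contEval _)
    have ha : Integrable (fun y : ℝ =>
        x * (((U ℝ ((k+1:ℕ):ℤ)).eval (x / 2) - (U ℝ ((k+1:ℕ):ℤ)).eval (y / 2)) / (x - y))
        + (U ℝ ((k+1:ℕ):ℤ)).eval (y / 2)) arcsineLaw := hb.add hc
    refine ⟨(ha.sub ih1.1).congr hae.symm, ?_⟩
    rw [integral_congr_ae hae, integral_sub ha ih1.1, integral_add hb hc,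
      integral_const_mul, cheb_U_integral (k+1)]
    have hT := Polynomial.Chebyshev.T_add_two ℝ ((k:ℤ) + 1)
    have hcast3 : ((k + 3 : ℕ) : ℤ) = ((k:ℤ) + 1) + 2 := by push_cast; ring
    have hcast2 : ((k + 2 : ℕ) : ℤ) = ((k:ℤ) + 1) + 1 := by push_cast; ring
    have hcast1 : ((k + 1 : ℕ) : ℤ) = ((k:ℤ) + 1) := by push_cast; ring
    have hTx : (T ℝ ((k + 3 : ℕ) : ℤ)).eval (x/2)
        = x * (T ℝ ((k + 2 : ℕ) : ℤ)).eval (x/2) - (T ℝ ((k + 1 : ℕ) : ℤ)).eval (x/2) := by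
      rw [hcast3, hcast2, hcast1, hT]
      simp only [Polynomial.eval_sub, Polynomial.eval_mul, Polynomial.eval_ofNat,
        Polynomial.eval_X]
      ring
    have e2 := ih2.2
    have e1 := ih1.2
    have he11 : (if Even (k+1+1) then (1:ℝ) else 0) = (if Even k then (1:ℝ) else 0) := by
      simp [Nat.even_add]
    have hek2 : (if Even (k+2) then (1:ℝ) else 0) = (if Even k then (1:ℝ) else 0) := by
      simp [Nat.even_add]
    have hek3 : (if Even (k+2+1) then (1:ℝ) else 0) = (if Even (k+1) then (1:ℝ) else 0) := by
      rcases Nat.even_or_odd k with h | h <;>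
        simp [h, Nat.even_add, Nat.even_add_one, Nat.not_even_iff_odd]
    rw [he11, show k+1+1 = k+2 by omega] at e2
    rw [hek2, hek3, show k+2+1 = k+3 by omega, hTx]
    linear_combination x * e2 - e1


lemma cheb_U_integral' (k : ℤ) (hk : -1 ≤ k) :
    ∫ y, (U ℝ k).eval (y / 2) ∂arcsineLaw = if Even k then 1 else 0 := by
  rcases eq_or_lt_of_le hk with h | h
  · rw [← h]
    simp [Polynomial.Chebyshev.U_neg_one]
  · have hk0 : 0 ≤ k := by omega
    lift k to ℕ using hk0
    rw [cheb_U_integral k]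
    simp [Int.even_coe_nat]

/-- The counting-number operator identity `𝒩 φ_n = n φ_n` for the rescaled
Chebyshev polynomials `φ_n(x) = T_n(x/2)`:
`n φ_n(x) = ∫ y φ_n'(y) β(dy) + x ∫ φ_n'(y) β(dy)
  - (4 - x²) ∫ (φ_n'(x) - φ_n'(y))/(x - y) β(dy)` for all `x ∈ [-2,2]`. -/
theorem counting_operator_chebyshev (n : ℕ) (hn : 1 ≤ n) (x : ℝ)
    (hx : x ∈ Set.Icc (-2 : ℝ) 2) :
    (n : ℝ) * (T ℝ n).eval (x / 2) =
      (∫ y, y * deriv (fun t => (T ℝ n).eval (t / 2)) y ∂arcsineLaw) +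
        x * (∫ y, deriv (fun t => (T ℝ n).eval (t / 2)) y ∂arcsineLaw) -
        (4 - x ^ 2) *
          ∫ y, (deriv (fun t => (T ℝ n).eval (t / 2)) x -
              deriv (fun t => (T ℝ n).eval (t / 2)) y) / (x - y) ∂arcsineLaw := by
  obtain ⟨m, rfl⟩ : ∃ m : ℕ, n = m + 1 := ⟨n - 1, by omega⟩
  clear hn hx
  set c : ℝ := ((m:ℝ) + 1) / 2 with hc
  have hderiv : (deriv fun t : ℝ => (T ℝ ((m+1:ℕ):ℤ)).eval (t / 2)) = fun y : ℝ =>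
      c * (U ℝ ((m:ℕ):ℤ)).eval (y / 2) := by
    funext y
    have hP := Polynomial.hasDerivAt (T ℝ ((m+1:ℕ):ℤ)) (y / 2)
    have hdiv : HasDerivAt (fun t : ℝ => t / 2) (1/2) y := (hasDerivAt_id y).div_const 2
    have hcomp := HasDerivAt.comp y hP hdiv
    have : deriv (fun t : ℝ => (T ℝ ((m+1:ℕ):ℤ)).eval (t / 2)) y
        = (derivative (T ℝ ((m+1:ℕ):ℤ))).eval (y / 2) * (1/2) := hcomp.deriv
    rw [this, Polynomial.Chebyshev.T_derivative_eq_U,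
      show ((m+1:ℕ):ℤ) - 1 = ((m:ℕ):ℤ) by push_cast; ring]
    simp only [Polynomial.eval_mul, Polynomial.eval_intCast]
    push_cast
    ring
  rw [hderiv]
  -- first integral
  have hU1 : ∀ y : ℝ, y * (c * (U ℝ ((m:ℕ):ℤ)).eval (y / 2))
      = c * ((U ℝ ((m:ℤ)+1)).eval (y / 2) + (U ℝ ((m:ℤ)-1)).eval (y / 2)) := by
    intro y
    have hU := Polynomial.Chebyshev.U_eq ℝ ((m:ℤ)+1)
    have : (U ℝ ((m:ℤ)+1)).eval (y/2) = 2 * (y/2) * (U ℝ ((m:ℤ)+1-1)).eval (y/2)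
        - (U ℝ ((m:ℤ)+1-2)).eval (y/2) := by rw [hU]; simp
    rw [show (m:ℤ)+1-1 = (m:ℤ) by ring, show (m:ℤ)+1-2 = (m:ℤ)-1 by ring] at this
    rw [this]
    ring
  have hint1 : ∀ j : ℤ, Integrable (fun y : ℝ => (U ℝ j).eval (y / 2)) arcsineLaw :=
    fun j => integrable_arcsine_of_continuous (contEval _)
  have hT1 : (∫ y, y * (c * (U ℝ ((m:ℕ):ℤ)).eval (y / 2)) ∂arcsineLaw)
      = c * ((if Even ((m:ℤ)+1) then (1:ℝ) else 0) + (if Even ((m:ℤ)-1) then (1:ℝ) else 0)) := by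
    rw [integral_congr_ae (Eventually.of_forall hU1), integral_const_mul,
      integral_add (hint1 _) (hint1 _), cheb_U_integral' ((m:ℤ)+1) (by omega),
      cheb_U_integral' ((m:ℤ)-1) (by omega)]
  have hT2 : (∫ y, c * (U ℝ ((m:ℕ):ℤ)).eval (y / 2) ∂arcsineLaw)
      = c * (if Even (m:ℕ) then (1:ℝ) else 0) := by
    rw [integral_const_mul, cheb_U_integral m]
  have hU3 : ∀ y : ℝ, (c * (U ℝ ((m:ℕ):ℤ)).eval (x / 2) - c * (U ℝ ((m:ℕ):ℤ)).eval (y / 2)) / (x - y)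
      = c * (((U ℝ ((m:ℕ):ℤ)).eval (x / 2) - (U ℝ ((m:ℕ):ℤ)).eval (y / 2)) / (x - y)) := by
    intro y
    rw [← mul_sub, mul_div_assoc]
  have hDm := Dm_main x m
  have hT3 : (∫ y, (c * (U ℝ ((m:ℕ):ℤ)).eval (x / 2) - c * (U ℝ ((m:ℕ):ℤ)).eval (y / 2)) / (x - y)
      ∂arcsineLaw) = c * ∫ y, ((U ℝ ((m:ℕ):ℤ)).eval (x / 2) - (U ℝ ((m:ℕ):ℤ)).eval (y / 2)) / (x - y)
      ∂arcsineLaw := by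
    rw [integral_congr_ae (Eventually.of_forall hU3), integral_const_mul]
  rw [hT1, hT2, hT3]
  have key := hDm.2
  -- parity bookkeeping
  have hpar1 : (if Even ((m:ℤ)-1) then (1:ℝ) else 0) = (if Even (m+1 : ℕ) then (1:ℝ) else 0) := by
    have h : Even ((m:ℤ)-1) ↔ Even ((m+1:ℕ)) := by
      rw [Int.even_sub_one, Int.even_coe_nat, Nat.even_add_one]
    simp only [h]
  have hpar2 : (if Even ((m:ℤ)+1) then (1:ℝ) else 0) = (if Even (m+1 : ℕ) then (1:ℝ) else 0) := by
    have h : Even ((m:ℤ)+1) ↔ Even ((m+1:ℕ)) := by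
      rw [show (m:ℤ)+1 = ((m+1:ℕ):ℤ) by push_cast; ring, Int.even_coe_nat]
    simp only [h]
  rw [hpar1, hpar2] at hT1
  have hcn : ((m+1:ℕ):ℝ) = 2 * c := by rw [hc]; push_cast; ring
  rw [hcn]
  linear_combination c * key - (((m:ℝ)+1)/2) * hpar1 - (((m:ℝ)+1)/2) * hpar2
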